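/- Second-derivative consequence of Sylvester's identity (coefficient of a_{i,n+1}·a_{j,n+1} in the inductive step): Let R be a commutative ring, n ≥ 0, A an (n+2)×(n+2) matrix over R, v : Fin (n+2) → R, and r, s distinct indices in Fin (n+2) with 2 ≤ r and 2 ≤ s. Set B = A.updateRow r v and C = A.updateRow s v. Then det(B) · det(C_{0,1|0,1}) + det(C) · det(B_{0,1|0,1}) = det(B_{0|0}) · det(C_{1|1}) + det(C_{0|0}) · det(B_{1|1}) − det(B_{0|1}) · det(C_{1|0}) − det(C_{0|1}) · det(B_{1|0}). -/

import Mathlib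

open Matrix

section SylvesterAux
variable {R : Type*} [CommRing R]

set_option linter.unusedSectionVars false

lemma det_col_single {m : ℕ} (Q : Matrix (Fin (m+1)) (Fin (m+1)) R)
    (h : ∀ i, Q i 0 = if i = 0 then 1 else 0) :
    Q.det = (Q.submatrix Fin.succ Fin.succ).det := by
  rw [det_succ_column_zero, Fintype.sum_eq_single (0 : Fin (m+1))]
  · simp [h, Fin.succAbove_zero]
  · intro i hi; simp [h, hi]

lemma det_double_single {n : ℕ} (M : Matrix (Fin (n+2)) (Fin (n+2)) R) :
    ((M.updateCol 0 (fun i => if i = 0 then 1 else 0)).updateCol 1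
        (fun i => if i = 1 then 1 else 0)).det
      = (M.submatrix (fun p : Fin n => p.succ.succ) (fun q : Fin n => q.succ.succ)).det := by
  set Q1 := (M.updateCol 0 (fun i => if i = 0 then 1 else 0)).updateCol 1
      (fun i => if i = 1 then 1 else 0) with hQ1
  rw [det_col_single Q1 (fun i => by
    simp [hQ1, updateCol_apply, Fin.one_eq_zero_iff]
  )]
  rw [det_col_single _ (fun i => by
    simp only [hQ1, submatrix_apply, updateCol_apply, Fin.succ_ne_zero, if_false]
    rw [if_pos Fin.succ_zero_eq_one]
    by_cases hi : i = 0
    · subst hi; simp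
    · have : i.succ ≠ 1 := fun h => hi (Fin.succ_injective _ (h.trans Fin.succ_zero_eq_one.symm))
      simp [hi, this]
  )]
  rw [submatrix_submatrix]
  congr 1

lemma det_update_two_cols {n : ℕ} (c d : Fin (n+2) → R) :
    (((1 : Matrix (Fin (n+2)) (Fin (n+2)) R).updateCol 0 c).updateCol 1 d).det
      = c 0 * d 1 - c 1 * d 0 := by
  set P := ((1 : Matrix (Fin (n+2)) (Fin (n+2)) R).updateCol 0 c).updateCol 1 d with hP
  let e : Fin 2 ⊕ Fin n ≃ Fin (n+2) := finSumFinEquiv.trans (finCongr (by omega))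
  have he0 : e (Sum.inl 0) = 0 := by simp [e, finSumFinEquiv, Fin.ext_iff]
  have he1 : e (Sum.inl 1) = 1 := by simp [e, finSumFinEquiv, Fin.ext_iff]
  have her : ∀ j : Fin n, (e (Sum.inr j)).val = 2 + j.val := by
    intro j; simp [e, finSumFinEquiv]; omega
  have hP0 : ∀ i, P i 0 = c i := by
    intro i
    rw [hP, updateCol_ne (by simp [Fin.ext_iff] : (0 : Fin (n+2)) ≠ 1), updateCol_self]
  have hP1 : ∀ i, P i 1 = d i := by intro i; rw [hP, updateCol_self]
  have key : P.submatrix e e =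
      fromBlocks !![c 0, d 0; c 1, d 1] 0
        (of fun i j => P (e (Sum.inr i)) (e (Sum.inl j))) 1 := by
    ext i j
    cases i with
    | inl i => cases j with
      | inl j =>
        fin_cases i <;> fin_cases j <;>
          simp_all [fromBlocks, submatrix_apply]
      | inr j =>
        have hne0 : e (Sum.inr j) ≠ 0 := by
          rw [Fin.ne_iff_vne, her]
          simp only [Fin.val_zero, Fin.val_one]; omega
        have hne1 : e (Sum.inr j) ≠ 1 := by
          rw [Fin.ne_iff_vne, her]
          simp only [Fin.val_zero, Fin.val_one]; omega
        have hne : e (Sum.inl i) ≠ e (Sum.inr j) := by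
          simp [e.injective.ne_iff]
        simp [fromBlocks, submatrix_apply, hP, updateCol_ne hne1,
          updateCol_ne hne0, one_apply, hne]
    | inr i => cases j with
      | inl j => simp [fromBlocks, submatrix_apply]
      | inr j =>
        have hne0 : e (Sum.inr j) ≠ 0 := by
          rw [Fin.ne_iff_vne, her]
          simp only [Fin.val_zero, Fin.val_one]; omega
        have hne1 : e (Sum.inr j) ≠ 1 := by
          rw [Fin.ne_iff_vne, her]
          simp only [Fin.val_zero, Fin.val_one]; omega
        simp [fromBlocks, submatrix_apply, hP, updateCol_ne hne1,
          updateCol_ne hne0, one_apply, e.injective.eq_iff]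
  calc P.det = (P.submatrix e e).det := (det_submatrix_equiv_self e P).symm
    _ = c 0 * d 1 - c 1 * d 0 := by
        rw [key, det_fromBlocks_zero₁₂, det_one, mul_one, det_fin_two]
        simp
        ring

lemma dj_mul (n : ℕ) (M : Matrix (Fin (n+2)) (Fin (n+2)) R) :
    M.det * (M.det *
        (M.submatrix (fun p : Fin n => p.succ.succ) (fun q : Fin n => q.succ.succ)).det)
      = M.det *
        ((M.submatrix (0 : Fin (n+2)).succAbove (0 : Fin (n+2)).succAbove).det *
            (M.submatrix (1 : Fin (n+2)).succAbove (1 : Fin (n+2)).succAbove).det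
          - (M.submatrix (0 : Fin (n+2)).succAbove (1 : Fin (n+2)).succAbove).det *
            (M.submatrix (1 : Fin (n+2)).succAbove (0 : Fin (n+2)).succAbove).det) := by
  classical
  set N := adjugate M with hN
  set P := (((1 : Matrix (Fin (n+2)) (Fin (n+2)) R)).updateCol 0 (fun i => N i 0)).updateCol
      1 (fun i => N i 1) with hPdef
  have hMN : M * N = M.det • (1 : Matrix (Fin (n+2)) (Fin (n+2)) R) := mul_adjugate M
  have h01 : (0 : Fin (n+2)) ≠ 1 := by simp [Fin.ext_iff]
  have hMP : M * P = ((M.updateCol 0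
        (M.det • fun i => (if i = 0 then (1:R) else 0))).updateCol
      1 (M.det • fun i => (if i = 1 then (1:R) else 0))) := by
    ext i j
    rw [mul_apply]
    simp only [updateCol_apply, Pi.smul_apply, smul_eq_mul]
    by_cases hj1 : j = 1
    · subst hj1
      have : ∀ k, P k 1 = N k 1 := fun k => by rw [hPdef, updateCol_self]
      simp_rw [this]
      have := congrFun (congrFun hMN i) 1
      rw [mul_apply] at this
      rw [this]
      simp [one_apply]
    · by_cases hj0 : j = 0
      · subst hj0
        have : ∀ k, P k 0 = N k 0 := fun k => by
          rw [hPdef, updateCol_ne h01, updateCol_self]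
        simp_rw [this]
        have := congrFun (congrFun hMN i) 0
        rw [mul_apply] at this
        rw [this]
        simp [one_apply, h01]
      · have : ∀ k, P k j = (1 : Matrix (Fin (n+2)) (Fin (n+2)) R) k j := fun k => by
          rw [hPdef, updateCol_ne hj1, updateCol_ne hj0]
        simp_rw [this]
        simp [one_apply, hj0, hj1]
  have hcomm : ∀ (Q : Matrix (Fin (n+2)) (Fin (n+2)) R) (c d : Fin (n+2) → R),
      (Q.updateCol 0 c).updateCol 1 d = (Q.updateCol 1 d).updateCol 0 c := by
    intro Q c d
    ext a b
    by_cases hb1 : b = 1 <;> by_cases hb0 : b = 0 <;>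
      simp_all [updateCol_apply, h01.symm]
  have h2 : (M * P).det = M.det * (M.det *
      (M.submatrix (fun p : Fin n => p.succ.succ) (fun q : Fin n => q.succ.succ)).det) := by
    rw [hMP, det_updateCol_smul, hcomm, det_updateCol_smul, ← hcomm, det_double_single]
  have h4 : P.det = (M.submatrix (0 : Fin (n+2)).succAbove (0 : Fin (n+2)).succAbove).det *
            (M.submatrix (1 : Fin (n+2)).succAbove (1 : Fin (n+2)).succAbove).det
          - (M.submatrix (0 : Fin (n+2)).succAbove (1 : Fin (n+2)).succAbove).det *
            (M.submatrix (1 : Fin (n+2)).succAbove (0 : Fin (n+2)).succAbove).det := by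
    rw [hPdef, det_update_two_cols]
    rw [hN, adjugate_fin_succ_eq_det_submatrix, adjugate_fin_succ_eq_det_submatrix,
      adjugate_fin_succ_eq_det_submatrix, adjugate_fin_succ_eq_det_submatrix]
    simp [Fin.val_one]
    try ring
  rw [← h2, det_mul, h4]

lemma dj (n : ℕ) (M : Matrix (Fin (n+2)) (Fin (n+2)) R) :
    M.det * (M.submatrix (fun p : Fin n => p.succ.succ) (fun q : Fin n => q.succ.succ)).det
      = (M.submatrix (0 : Fin (n+2)).succAbove (0 : Fin (n+2)).succAbove).det *
            (M.submatrix (1 : Fin (n+2)).succAbove (1 : Fin (n+2)).succAbove).det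
          - (M.submatrix (0 : Fin (n+2)).succAbove (1 : Fin (n+2)).succAbove).det *
            (M.submatrix (1 : Fin (n+2)).succAbove (0 : Fin (n+2)).succAbove).det := by
  classical
  set X := mvPolynomialX (Fin (n+2)) (Fin (n+2)) ℤ with hX
  have hXdet : X.det ≠ 0 := det_mvPolynomialX_ne_zero (Fin (n+2)) ℤ
  have hcancel := mul_left_cancel₀ hXdet (dj_mul n X)
  set f : MvPolynomial (Fin (n+2) × Fin (n+2)) ℤ →+* R :=
    MvPolynomial.eval₂Hom (Int.castRingHom R) (fun p => M p.1 p.2) with hf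
  have hsub : ∀ (k : ℕ) (a b : Fin k → Fin (n+2)),
      f (X.submatrix a b).det = (M.submatrix a b).det := by
    intro k a b
    rw [RingHom.map_det]
    congr 1
    ext i j
    simp [hf, hX, RingHom.mapMatrix_apply, mvPolynomialX_apply]
  have hdet : f X.det = M.det := by
    rw [RingHom.map_det]
    congr 1
    ext i j
    simp [hf, hX, RingHom.mapMatrix_apply, mvPolynomialX_apply]
  have := congrArg f hcancel
  simpa only [map_sub, _root_.map_mul, hdet, hsub] using this

lemma submatrix_updateRow_inj {m k : ℕ} (N : Matrix (Fin m) (Fin m) R)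
    (ρ κ : Fin k → Fin m) (hρ : Function.Injective ρ) {r : Fin m} {r' : Fin k}
    (h : ρ r' = r) (x : Fin m → R) :
    (N.updateRow r x).submatrix ρ κ = (N.submatrix ρ κ).updateRow r' (fun j => x (κ j)) := by
  ext i j
  by_cases hi : i = r'
  · subst hi; simp [h, submatrix_apply]
  · have : ρ i ≠ r := fun hc => hi (hρ (hc.trans h.symm))
    simp [submatrix_apply, updateRow_ne this, updateRow_ne hi]

lemma updateRow_comm' {m : ℕ} (M : Matrix (Fin m) (Fin m) R) {r s : Fin m} (hrs : r ≠ s)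
    (a b : Fin m → R) :
    (M.updateRow r a).updateRow s b = (M.updateRow s b).updateRow r a := by
  ext i j
  by_cases hir : i = r <;> by_cases his : i = s <;>
    simp_all [updateRow_apply]

lemma det_lin {m : ℕ} (M : Matrix (Fin m) (Fin m) R) (r : Fin m) (w : Fin m → R) :
    (M.updateRow r (M r + w)).det = M.det + (M.updateRow r w).det := by
  rw [det_updateRow_add, updateRow_eq_self]

lemma det_quad {m : ℕ} (M : Matrix (Fin m) (Fin m) R) {r s : Fin m} (hrs : r ≠ s)
    (w : Fin m → R) :
    ((M.updateRow r (M r + w)).updateRow s (M s + w)).det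
      = M.det + (M.updateRow r w).det + (M.updateRow s w).det := by
  have hQs : (M.updateRow r (M r + w)) s = M s := updateRow_ne (Ne.symm hrs)
  rw [det_updateRow_add]
  have h1 : (M.updateRow r (M r + w)).updateRow s (M s)
      = M.updateRow r (M r + w) := by rw [← hQs, updateRow_eq_self]
  rw [h1, det_lin]
  have h2 : (M.updateRow r (M r + w)).updateRow s w
      = (M.updateRow s w).updateRow r (M r + w) :=
    updateRow_comm' _ hrs _ _
  have hXr : M r = (M.updateRow s w) r := (updateRow_ne hrs).symm
  rw [h2, det_updateRow_add]
  conv_lhs => rw [hXr, updateRow_eq_self]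
  have h3 : ((M.updateRow s w).updateRow r w).det = 0 := by
    apply det_zero_of_row_eq hrs
    rw [updateRow_self, updateRow_ne (Ne.symm hrs), updateRow_self]
  rw [h3]
  ring

lemma factor_lin {m k : ℕ} (M : Matrix (Fin m) (Fin m) R) (w : Fin m → R)
    {r : Fin m} {r' : Fin k} (ρ κ : Fin k → Fin m) (hρ : Function.Injective ρ)
    (h : ρ r' = r) :
    ((M.updateRow r (M r + w)).submatrix ρ κ).det
      = (M.submatrix ρ κ).det + ((M.updateRow r w).submatrix ρ κ).det := by
  rw [submatrix_updateRow_inj M ρ κ hρ h, submatrix_updateRow_inj M ρ κ hρ h]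
  have hw : (fun j => (M r + w) (κ j))
      = (M.submatrix ρ κ) r' + (fun j => w (κ j)) := by
    funext j; simp [submatrix_apply, h]
  rw [hw, det_lin]

lemma factor_quad {m k : ℕ} (M : Matrix (Fin m) (Fin m) R) (w : Fin m → R)
    {r s : Fin m} {r' s' : Fin k} (ρ κ : Fin k → Fin m) (hρ : Function.Injective ρ)
    (hr : ρ r' = r) (hs : ρ s' = s) (hrs : r ≠ s) :
    (((M.updateRow r (M r + w)).updateRow s (M s + w)).submatrix ρ κ).det
      = (M.submatrix ρ κ).det + ((M.updateRow r w).submatrix ρ κ).det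
        + ((M.updateRow s w).submatrix ρ κ).det := by
  have hrs' : r' ≠ s' := fun e => hrs (by rw [← hr, ← hs, e])
  rw [submatrix_updateRow_inj _ ρ κ hρ hs, submatrix_updateRow_inj M ρ κ hρ hr,
    submatrix_updateRow_inj M ρ κ hρ hr, submatrix_updateRow_inj M ρ κ hρ hs]
  have hwr : (fun j => (M r + w) (κ j))
      = (M.submatrix ρ κ) r' + (fun j => w (κ j)) := by
    funext j; simp [submatrix_apply, hr]
  have hws : (fun j => (M s + w) (κ j))
      = (M.submatrix ρ κ) s' + (fun j => w (κ j)) := by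
    funext j; simp [submatrix_apply, hs]
  rw [hwr, hws, det_quad _ hrs']

end SylvesterAux

/-- Second-derivative consequence of Sylvester's identity: for `B = A.updateRow r v`
and `C = A.updateRow s v` with `r ≠ s` both distinct from `0` and `1`,
`det B * det C_{0,1|0,1} + det C * det B_{0,1|0,1}
  = det B_{0|0} * det C_{1|1} + det C_{0|0} * det B_{1|1}
    - det B_{0|1} * det C_{1|0} - det C_{0|1} * det B_{1|0}`. -/
theorem sylvester_second_derivative {R : Type*} [CommRing R] (n : ℕ)
    (A : Matrix (Fin (n + 2)) (Fin (n + 2)) R) (v : Fin (n + 2) → R)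
    (r s : Fin (n + 2)) (hrs : r ≠ s) (hr : 2 ≤ r.val) (hs : 2 ≤ s.val)
    (B C : Matrix (Fin (n + 2)) (Fin (n + 2)) R)
    (hB : B = A.updateRow r v) (hC : C = A.updateRow s v) :
    B.det * (C.submatrix (fun p : Fin n => p.succ.succ) (fun q : Fin n => q.succ.succ)).det
      + C.det * (B.submatrix (fun p : Fin n => p.succ.succ) (fun q : Fin n => q.succ.succ)).det
    = (B.submatrix (0 : Fin (n + 2)).succAbove (0 : Fin (n + 2)).succAbove).det *
        (C.submatrix (1 : Fin (n + 2)).succAbove (1 : Fin (n + 2)).succAbove).det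
      + (C.submatrix (0 : Fin (n + 2)).succAbove (0 : Fin (n + 2)).succAbove).det *
        (B.submatrix (1 : Fin (n + 2)).succAbove (1 : Fin (n + 2)).succAbove).det
      - (B.submatrix (0 : Fin (n + 2)).succAbove (1 : Fin (n + 2)).succAbove).det *
        (C.submatrix (1 : Fin (n + 2)).succAbove (0 : Fin (n + 2)).succAbove).det
      - (C.submatrix (0 : Fin (n + 2)).succAbove (1 : Fin (n + 2)).succAbove).det *
        (B.submatrix (1 : Fin (n + 2)).succAbove (0 : Fin (n + 2)).succAbove).det := by
  
  subst hB hC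
  obtain ⟨r0, hr0⟩ := Fin.exists_succAbove_eq
    (show r ≠ (0 : Fin (n+2)) by rw [Fin.ne_iff_vne, Fin.val_zero]; omega)
  obtain ⟨r1, hr1⟩ := Fin.exists_succAbove_eq
    (show r ≠ (1 : Fin (n+2)) by rw [Fin.ne_iff_vne]; simp [Fin.val_one]; omega)
  obtain ⟨s0, hs0⟩ := Fin.exists_succAbove_eq
    (show s ≠ (0 : Fin (n+2)) by rw [Fin.ne_iff_vne, Fin.val_zero]; omega)
  obtain ⟨s1, hs1⟩ := Fin.exists_succAbove_eq
    (show s ≠ (1 : Fin (n+2)) by rw [Fin.ne_iff_vne]; simp [Fin.val_one]; omega)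
  set r2 : Fin n := ⟨r.val - 2, by omega⟩ with hr2def
  set s2 : Fin n := ⟨s.val - 2, by omega⟩ with hs2def
  have hr2 : (fun p : Fin n => p.succ.succ) r2 = r := by
    apply Fin.ext; simp [Fin.val_succ, hr2def]; omega
  have hs2 : (fun p : Fin n => p.succ.succ) s2 = s := by
    apply Fin.ext; simp [Fin.val_succ, hs2def]; omega
  have hinj0 : Function.Injective (0 : Fin (n+2)).succAbove := Fin.succAbove_right_injective
  have hinj1 : Function.Injective (1 : Fin (n+2)).succAbove := Fin.succAbove_right_injective
  have hinjd : Function.Injective (fun p : Fin n => p.succ.succ) := fun a b h =>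
    Fin.succ_injective _ (Fin.succ_injective _ h)
  have djG := dj n ((A.updateRow r (A r + v)).updateRow s (A s + v))
  have djH1 := dj n (A.updateRow r (A r + v))
  have djH2 := dj n (A.updateRow s (A s + v))
  have djA := dj n A
  rw [det_quad A hrs v,
    factor_quad A v (fun p : Fin n => p.succ.succ) (fun q : Fin n => q.succ.succ) hinjd hr2 hs2 hrs,
    factor_quad A v (0 : Fin (n+2)).succAbove (0 : Fin (n+2)).succAbove hinj0 hr0 hs0 hrs,
    factor_quad A v (1 : Fin (n+2)).succAbove (1 : Fin (n+2)).succAbove hinj1 hr1 hs1 hrs,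
    factor_quad A v (0 : Fin (n+2)).succAbove (1 : Fin (n+2)).succAbove hinj0 hr0 hs0 hrs,
    factor_quad A v (1 : Fin (n+2)).succAbove (0 : Fin (n+2)).succAbove hinj1 hr1 hs1 hrs] at djG
  rw [det_lin A r v,
    factor_lin A v (fun p : Fin n => p.succ.succ) (fun q : Fin n => q.succ.succ) hinjd hr2,
    factor_lin A v (0 : Fin (n+2)).succAbove (0 : Fin (n+2)).succAbove hinj0 hr0,
    factor_lin A v (1 : Fin (n+2)).succAbove (1 : Fin (n+2)).succAbove hinj1 hr1,
    factor_lin A v (0 : Fin (n+2)).succAbove (1 : Fin (n+2)).succAbove hinj0 hr0,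
    factor_lin A v (1 : Fin (n+2)).succAbove (0 : Fin (n+2)).succAbove hinj1 hr1] at djH1
  rw [det_lin A s v,
    factor_lin A v (fun p : Fin n => p.succ.succ) (fun q : Fin n => q.succ.succ) hinjd hs2,
    factor_lin A v (0 : Fin (n+2)).succAbove (0 : Fin (n+2)).succAbove hinj0 hs0,
    factor_lin A v (1 : Fin (n+2)).succAbove (1 : Fin (n+2)).succAbove hinj1 hs1,
    factor_lin A v (0 : Fin (n+2)).succAbove (1 : Fin (n+2)).succAbove hinj0 hs0,
    factor_lin A v (1 : Fin (n+2)).succAbove (0 : Fin (n+2)).succAbove hinj1 hs1] at djH2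
  linear_combination djG - djH1 - djH2 + djA
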